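/- Let X and ε be independent real random variables that are sub-Gaussian with parameters B₁ and B₂ respectively, i.e. E[exp(λX)] ≤ exp(λ²B₁²/2) and E[exp(λε)] ≤ exp(λ²B₂²/2) for all λ ∈ ℝ. Then for any β > 0, E[|εX| · 1{|εX| > β}] ≤ 8 B₁ B₂ exp(−β/(2B₁B₂)). -/

import Mathlib

open MeasureTheory Real ProbabilityTheory

/- Auxiliary lemmas -/

lemma gauss_integrable (t : ℝ) :
    Integrable (fun g : ℝ => Real.exp (t * g) * Real.exp (-(1:ℝ)/2 * g ^ 2)) := by
  have h : ∀ g : ℝ, Real.exp (t * g) * Real.exp (-(1:ℝ)/2 * g ^ 2)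
      = Real.exp (t ^ 2 / 2) * Real.exp (-(1:ℝ)/2 * (g - t) ^ 2) := by
    intro g
    rw [← Real.exp_add, ← Real.exp_add]
    ring_nf
  simp_rw [h]
  apply Integrable.const_mul
  have hb : (0:ℝ) < 1/2 := by norm_num
  have h2 : Integrable (fun g : ℝ => Real.exp (-(1/2) * (g - t) ^ 2)) := by
    simpa using (integrable_exp_neg_mul_sq hb).comp_sub_right t
  simpa [neg_div] using h2

lemma gauss_mgf (t : ℝ) :
    ∫ g : ℝ, Real.exp (t * g) * Real.exp (-(1:ℝ)/2 * g ^ 2)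
      = Real.exp (t ^ 2 / 2) * Real.sqrt (2 * π) := by
  have h : ∀ g : ℝ, Real.exp (t * g) * Real.exp (-(1:ℝ)/2 * g ^ 2)
      = Real.exp (t ^ 2 / 2) * Real.exp (-(1:ℝ)/2 * (g - t) ^ 2) := by
    intro g
    rw [← Real.exp_add, ← Real.exp_add]
    ring_nf
  simp_rw [h]
  rw [integral_const_mul]
  have h2 : ∫ g : ℝ, Real.exp (-(1:ℝ)/2 * (g - t) ^ 2) = ∫ g : ℝ, Real.exp (-(1:ℝ)/2 * g ^ 2) :=
    integral_sub_right_eq_self (fun g => Real.exp (-(1:ℝ)/2 * g ^ 2)) t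
  rw [h2]
  have h3 : ∫ g : ℝ, Real.exp (-(1:ℝ)/2 * g ^ 2) = Real.sqrt (π / (1/2)) := by
    simpa [neg_div] using integral_gaussian (1/2)
  rw [h3]
  congr 1
  rw [div_div_eq_mul_div, div_one]
  ring_nf

lemma sq_mgf_bound {Ω : Type*} [MeasureSpace Ω] [IsProbabilityMeasure (volume : Measure Ω)]
    (ε : Ω → ℝ) (B : ℝ) (hm : Measurable ε)
    (hε : ∀ l : ℝ, ∫ ω, Real.exp (l * ε ω) ≤ Real.exp (l ^ 2 * B ^ 2 / 2))
    (hInt : ∀ l : ℝ, Integrable (fun ω => Real.exp (l * ε ω)))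
    (s : ℝ) (hs : 0 ≤ s) (hsB : 2 * s * B ^ 2 < 1) :
    ∫⁻ ω, ENNReal.ofReal (Real.exp (s * ε ω ^ 2))
      ≤ ENNReal.ofReal (1 / Real.sqrt (1 - 2 * s * B ^ 2)) := by
  have hc : (0:ℝ) < 1 - 2 * s * B ^ 2 := by linarith
  have h2π : (0:ℝ) < Real.sqrt (2 * π) := Real.sqrt_pos.mpr (by positivity)
  set c : ℝ := Real.sqrt (2 * s) with hc_def
  have hc2 : c ^ 2 = 2 * s := Real.sq_sqrt (by linarith)
  have key : ∀ e : ℝ, ENNReal.ofReal (Real.exp (s * e ^ 2)) * ENNReal.ofReal (Real.sqrt (2 * π))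
      = ∫⁻ g : ℝ, ENNReal.ofReal (Real.exp (c * e * g) * Real.exp (-(1:ℝ)/2 * g ^ 2)) := by
    intro e
    rw [← ENNReal.ofReal_mul (by positivity)]
    rw [← ofReal_integral_eq_lintegral_ofReal (gauss_integrable (c * e))
      (Filter.Eventually.of_forall fun g => by positivity)]
    congr 1
    rw [gauss_mgf (c * e)]
    congr 2
    rw [mul_pow, hc2]; ring
  rw [← ENNReal.mul_le_mul_iff_left (c := ENNReal.ofReal (Real.sqrt (2 * π)))
    (ENNReal.ofReal_pos.mpr h2π).ne' ENNReal.ofReal_ne_top]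
  rw [← lintegral_mul_const _ (by measurability)]
  simp_rw [key]
  rw [lintegral_lintegral_swap (by
    apply Measurable.aemeasurable
    apply Measurable.ennreal_ofReal
    apply Measurable.mul
    · exact (((hm.comp measurable_fst).const_mul c).mul measurable_snd).exp
    · exact (((measurable_snd : Measurable fun p : Ω × ℝ => p.2).pow_const 2).const_mul
        (-(1:ℝ)/2)).exp)]
  have inner_bound : ∀ g : ℝ,
      (∫⁻ ω, ENNReal.ofReal (Real.exp (c * ε ω * g) * Real.exp (-(1:ℝ)/2 * g ^ 2)))
      ≤ ENNReal.ofReal (Real.exp (s * B ^ 2 * g ^ 2) * Real.exp (-(1:ℝ)/2 * g ^ 2)) := by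
    intro g
    have e1 : ∀ ω, Real.exp (c * ε ω * g) * Real.exp (-(1:ℝ)/2 * g ^ 2)
        = Real.exp ((c * g) * ε ω) * Real.exp (-(1:ℝ)/2 * g ^ 2) := by
      intro ω; ring_nf
    simp_rw [e1, ENNReal.ofReal_mul (le_of_lt (Real.exp_pos _))]
    rw [lintegral_mul_const _ (by measurability)]
    apply mul_le_mul_left
    rw [← ofReal_integral_eq_lintegral_ofReal (hInt (c * g))
      (Filter.Eventually.of_forall fun ω => le_of_lt (Real.exp_pos _))]
    apply ENNReal.ofReal_le_ofReal
    calc ∫ ω, Real.exp ((c * g) * ε ω) ≤ Real.exp ((c * g) ^ 2 * B ^ 2 / 2) := hε (c * g)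
      _ = Real.exp (s * B ^ 2 * g ^ 2) := by rw [mul_pow, hc2]; ring_nf
  calc ∫⁻ g : ℝ, ∫⁻ ω, ENNReal.ofReal (Real.exp (c * ε ω * g) * Real.exp (-(1:ℝ)/2 * g ^ 2))
      ≤ ∫⁻ g : ℝ, ENNReal.ofReal (Real.exp (s * B ^ 2 * g ^ 2) * Real.exp (-(1:ℝ)/2 * g ^ 2)) :=
        lintegral_mono inner_bound
    _ = ENNReal.ofReal (∫ g : ℝ, Real.exp (-(1/2 - s * B ^ 2) * g ^ 2)) := by
        rw [← ofReal_integral_eq_lintegral_ofReal]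
        · congr 1; apply integral_congr_ae; filter_upwards with g
          rw [← Real.exp_add]; ring_nf
        · have hpos : (0:ℝ) < 1/2 - s * B ^ 2 := by linarith
          apply (integrable_exp_neg_mul_sq hpos).congr
          filter_upwards with g
          rw [← Real.exp_add]; ring_nf
        · filter_upwards with g; positivity
    _ ≤ ENNReal.ofReal (1 / Real.sqrt (1 - 2 * s * B ^ 2)) * ENNReal.ofReal (Real.sqrt (2 * π)) := by
        rw [← ENNReal.ofReal_mul (by positivity)]
        apply ENNReal.ofReal_le_ofReal
        rw [integral_gaussian]
        have heq : π / (1/2 - s * B ^ 2) = 2 * π / (1 - 2 * s * B ^ 2) := by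
          rw [div_eq_div_iff (by linarith) (ne_of_gt hc)]; ring
        rw [heq, Real.sqrt_div (by positivity)]
        rw [one_div, div_eq_mul_inv]
        ring_nf
        exact le_refl _

lemma prod_mgf_bound {Ω : Type*} [MeasureSpace Ω] [IsProbabilityMeasure (volume : Measure Ω)]
    (X ε : Ω → ℝ) (B₁ B₂ : ℝ) (hB₁ : 0 < B₁) (hB₂ : 0 < B₂)
    (hmX : Measurable X) (hmε : Measurable ε)
    (hindep : IndepFun X ε)
    (hX : ∀ l : ℝ, ∫ ω, Real.exp (l * X ω) ≤ Real.exp (l ^ 2 * B₁ ^ 2 / 2))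
    (hε : ∀ l : ℝ, ∫ ω, Real.exp (l * ε ω) ≤ Real.exp (l ^ 2 * B₂ ^ 2 / 2))
    (hIntX : ∀ l : ℝ, Integrable (fun ω => Real.exp (l * X ω)))
    (hIntε : ∀ l : ℝ, Integrable (fun ω => Real.exp (l * ε ω)))
    (c : ℝ) (hc : c ^ 2 * B₁ ^ 2 * B₂ ^ 2 < 1) :
    ∫⁻ ω, ENNReal.ofReal (Real.exp (c * (ε ω * X ω)))
      ≤ ENNReal.ofReal (1 / Real.sqrt (1 - c ^ 2 * B₁ ^ 2 * B₂ ^ 2)) := by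
  have hmap : Measure.map (fun ω => (X ω, ε ω)) (volume : Measure Ω)
      = (Measure.map X volume).prod (Measure.map ε volume) :=
    (indepFun_iff_map_prod_eq_prod_map_map hmX.aemeasurable hmε.aemeasurable).mp hindep
  haveI : IsProbabilityMeasure (Measure.map X (volume : Measure Ω)) :=
    Measure.isProbabilityMeasure_map hmX.aemeasurable
  haveI : IsProbabilityMeasure (Measure.map ε (volume : Measure Ω)) :=
    Measure.isProbabilityMeasure_map hmε.aemeasurable
  have hF : Measurable (fun p : ℝ × ℝ => ENNReal.ofReal (Real.exp (c * (p.2 * p.1)))) := by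
    apply Measurable.ennreal_ofReal
    exact ((measurable_snd.mul measurable_fst).const_mul c).exp
  have step1 : ∫⁻ ω, ENNReal.ofReal (Real.exp (c * (ε ω * X ω)))
      = ∫⁻ e, ∫⁻ x, ENNReal.ofReal (Real.exp (c * (e * x)))
          ∂(Measure.map X volume) ∂(Measure.map ε volume) := by
    rw [← lintegral_map hF (hmX.prodMk hmε), hmap,
      lintegral_prod_symm _ hF.aemeasurable]
  rw [step1]
  have inner_bound : ∀ e : ℝ,
      (∫⁻ x, ENNReal.ofReal (Real.exp (c * (e * x))) ∂(Measure.map X volume))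
      ≤ ENNReal.ofReal (Real.exp ((c ^ 2 * B₁ ^ 2 / 2) * e ^ 2)) := by
    intro e
    rw [lintegral_map (Measurable.ennreal_ofReal (by fun_prop)) hmX]
    have e1 : ∀ ω, Real.exp (c * (e * X ω)) = Real.exp ((c * e) * X ω) := by
      intro ω; ring_nf
    simp_rw [e1]
    rw [← ofReal_integral_eq_lintegral_ofReal (hIntX (c * e))
      (Filter.Eventually.of_forall fun ω => le_of_lt (Real.exp_pos _))]
    apply ENNReal.ofReal_le_ofReal
    calc ∫ ω, Real.exp ((c * e) * X ω) ≤ Real.exp ((c * e) ^ 2 * B₁ ^ 2 / 2) := hX (c * e)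
      _ = Real.exp ((c ^ 2 * B₁ ^ 2 / 2) * e ^ 2) := by ring_nf
  calc ∫⁻ e, ∫⁻ x, ENNReal.ofReal (Real.exp (c * (e * x)))
          ∂(Measure.map X volume) ∂(Measure.map ε volume)
      ≤ ∫⁻ e, ENNReal.ofReal (Real.exp ((c ^ 2 * B₁ ^ 2 / 2) * e ^ 2)) ∂(Measure.map ε volume) :=
        lintegral_mono inner_bound
    _ = ∫⁻ ω, ENNReal.ofReal (Real.exp ((c ^ 2 * B₁ ^ 2 / 2) * ε ω ^ 2)) := by
        rw [lintegral_map (Measurable.ennreal_ofReal (by fun_prop)) hmε]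
    _ ≤ ENNReal.ofReal (1 / Real.sqrt (1 - c ^ 2 * B₁ ^ 2 * B₂ ^ 2)) := by
        have h := sq_mgf_bound ε B₂ hmε hε hIntε (c ^ 2 * B₁ ^ 2 / 2) (by positivity)
          (by nlinarith)
        convert h using 3
        ring

lemma pointwise_bound (a β y : ℝ) (ha : 0 < a) (hy : 0 ≤ y) :
    (if β < y then y else 0) + 10 * a / 3 * Real.exp (-β / (2 * a))
      ≤ 10 * a / 3 * Real.exp (-β / (2 * a)) * Real.exp (4 / (5 * a) * y) := by
  have hC : (0:ℝ) < 10 * a / 3 := by linarith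
  have hEβ : (0:ℝ) < Real.exp (-β / (2 * a)) := Real.exp_pos _
  by_cases h : β < y
  · rw [if_pos h]
    have hsplit : Real.exp (4 / (5 * a) * y)
        = Real.exp (3 * y / (10 * a)) * Real.exp (y / (2 * a)) := by
      rw [← Real.exp_add]
      congr 1
      field_simp
      ring
    have hE1 : (1:ℝ) ≤ Real.exp (3 * y / (10 * a)) := Real.one_le_exp (by positivity)
    have hE2 : (1:ℝ) ≤ Real.exp (y / (2 * a)) := Real.one_le_exp (by positivity)
    have h1 : y ≤ 10 * a / 3 * (Real.exp (3 * y / (10 * a)) - 1) := by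
      have k := Real.add_one_le_exp (3 * y / (10 * a))
      have heq : 10 * a / 3 * (3 * y / (10 * a)) = y := by field_simp
      have := mul_le_mul_of_nonneg_left
        (show 3 * y / (10 * a) ≤ Real.exp (3 * y / (10 * a)) - 1 by linarith) hC.le
      linarith
    have h2 : (1:ℝ) ≤ Real.exp (-β / (2 * a)) * Real.exp (y / (2 * a)) := by
      rw [← Real.exp_add]
      apply Real.one_le_exp
      rw [← add_div]
      apply div_nonneg (by linarith) (by linarith)
    rw [hsplit]
    have fact1 := mul_le_mul_of_nonneg_left h2
      (mul_nonneg hC.le (by linarith : (0:ℝ) ≤ Real.exp (3 * y / (10 * a)) - 1))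
    have fact2 := mul_le_mul_of_nonneg_left hE2 (mul_nonneg hC.le hEβ.le)
    nlinarith [h1, fact1, fact2]
  · rw [if_neg h]
    have h3 : (1:ℝ) ≤ Real.exp (4 / (5 * a) * y) := Real.one_le_exp (by positivity)
    nlinarith [mul_le_mul_of_nonneg_left h3 (mul_nonneg hC.le hEβ.le)]

lemma abs_exp_bound (c u : ℝ) : Real.exp (c * |u|) ≤ Real.exp (c * u) + Real.exp (-c * u) := by
  rcases abs_cases u with ⟨h1, _⟩ | ⟨h1, _⟩
  · rw [h1]; nlinarith [Real.exp_pos (-c * u)]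
  · rw [h1, show c * -u = -c * u by ring]; nlinarith [Real.exp_pos (c * u)]

/-- If `X` and `ε` are independent sub-Gaussian random variables with
parameters `B₁` and `B₂`, then
`E[|εX| · 1{|εX| > β}] ≤ 8 B₁ B₂ exp(−β/(2B₁B₂))`. -/
theorem truncation_product_subGaussian {Ω : Type*} [MeasureSpace Ω]
    [IsProbabilityMeasure (volume : Measure Ω)]
    (X ε : Ω → ℝ) (B₁ B₂ : ℝ) (hB₁ : 0 < B₁) (hB₂ : 0 < B₂)
    (hmX : Measurable X) (hmε : Measurable ε)
    (hindep : IndepFun X ε)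
    (hX : ∀ l : ℝ, ∫ ω, Real.exp (l * X ω) ≤ Real.exp (l ^ 2 * B₁ ^ 2 / 2))
    (hε : ∀ l : ℝ, ∫ ω, Real.exp (l * ε ω) ≤ Real.exp (l ^ 2 * B₂ ^ 2 / 2))
    (hIntX : ∀ l : ℝ, Integrable (fun ω => Real.exp (l * X ω)))
    (hIntε : ∀ l : ℝ, Integrable (fun ω => Real.exp (l * ε ω)))
    (β : ℝ) (hβ : 0 < β) :
    ∫ ω, (if β < |ε ω * X ω| then |ε ω * X ω| else 0)
      ≤ 8 * B₁ * B₂ * Real.exp (-β / (2 * B₁ * B₂)) := by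
  have ha : (0:ℝ) < B₁ * B₂ := mul_pos hB₁ hB₂
  set a : ℝ := B₁ * B₂ with ha_def
  set c : ℝ := 4 / (5 * a) with hc_def
  have hc2 : c ^ 2 * B₁ ^ 2 * B₂ ^ 2 = 16 / 25 := by
    rw [hc_def, ha_def]
    field_simp
    ring
  set K : ℝ := 10 * a / 3 * Real.exp (-β / (2 * a)) with hK_def
  have hK : 0 < K := by positivity
  have hfm : Measurable (fun ω => (if β < |ε ω * X ω| then |ε ω * X ω| else 0 : ℝ)) :=
    Measurable.ite (measurableSet_lt measurable_const (hmε.mul hmX).abs)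
      (hmε.mul hmX).abs measurable_const
  have hf0 : ∀ ω, (0:ℝ) ≤ (if β < |ε ω * X ω| then |ε ω * X ω| else 0) := by
    intro ω; split
    · exact abs_nonneg _
    · exact le_refl 0
  rw [integral_eq_lintegral_of_nonneg_ae (Filter.Eventually.of_forall hf0)
    hfm.aestronglyMeasurable]
  apply ENNReal.toReal_le_of_le_ofReal (by positivity)
  -- MGF bounds for ±c
  have hIc : ∀ d : ℝ, d ^ 2 * B₁ ^ 2 * B₂ ^ 2 = 16 / 25 →
      ∫⁻ ω, ENNReal.ofReal (Real.exp (d * (ε ω * X ω))) ≤ ENNReal.ofReal (5/3) := by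
    intro d hd
    have h := prod_mgf_bound X ε B₁ B₂ hB₁ hB₂ hmX hmε hindep hX hε hIntX hIntε d
      (by rw [hd]; norm_num)
    have heq : (1:ℝ) / Real.sqrt (1 - d ^ 2 * B₁ ^ 2 * B₂ ^ 2) = 5/3 := by
      rw [hd, show ((1:ℝ) - 16/25) = (3/5)^2 by norm_num,
        Real.sqrt_sq (by norm_num : (0:ℝ) ≤ 3/5)]
      norm_num
    rwa [heq] at h
  have hE : ∫⁻ ω, ENNReal.ofReal (Real.exp (c * |ε ω * X ω|)) ≤ ENNReal.ofReal (10/3) := by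
    calc ∫⁻ ω, ENNReal.ofReal (Real.exp (c * |ε ω * X ω|))
        ≤ ∫⁻ ω, (ENNReal.ofReal (Real.exp (c * (ε ω * X ω)))
            + ENNReal.ofReal (Real.exp (-c * (ε ω * X ω)))) := by
          apply lintegral_mono
          intro ω
          dsimp only
          rw [← ENNReal.ofReal_add (Real.exp_pos _).le (Real.exp_pos _).le]
          exact ENNReal.ofReal_le_ofReal (abs_exp_bound c (ε ω * X ω))
      _ = (∫⁻ ω, ENNReal.ofReal (Real.exp (c * (ε ω * X ω))))
            + ∫⁻ ω, ENNReal.ofReal (Real.exp (-c * (ε ω * X ω))) := by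
          rw [lintegral_add_right _ (Measurable.ennreal_ofReal (by fun_prop))]
      _ ≤ ENNReal.ofReal (5/3) + ENNReal.ofReal (5/3) := by
          gcongr
          · exact hIc c hc2
          · exact hIc (-c) (by rw [neg_pow]; simpa using hc2)
      _ = ENNReal.ofReal (10/3) := by
          rw [← ENNReal.ofReal_add (by norm_num) (by norm_num)]
          norm_num
  have hmain : (∫⁻ ω, ENNReal.ofReal (if β < |ε ω * X ω| then |ε ω * X ω| else 0))
      + ENNReal.ofReal K ≤ ENNReal.ofReal (K * (10/3)) := by
    calc (∫⁻ ω, ENNReal.ofReal (if β < |ε ω * X ω| then |ε ω * X ω| else 0))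
          + ENNReal.ofReal K
        = ∫⁻ ω, (ENNReal.ofReal (if β < |ε ω * X ω| then |ε ω * X ω| else 0)
            + ENNReal.ofReal K) := by
          rw [lintegral_add_right _ measurable_const, lintegral_const, measure_univ, mul_one]
      _ ≤ ∫⁻ ω, ENNReal.ofReal (K * Real.exp (c * |ε ω * X ω|)) := by
          apply lintegral_mono
          intro ω
          dsimp only
          rw [← ENNReal.ofReal_add (hf0 ω) hK.le]
          apply ENNReal.ofReal_le_ofReal
          exact pointwise_bound a β |ε ω * X ω| ha (abs_nonneg _)
      _ = ENNReal.ofReal K * ∫⁻ ω, ENNReal.ofReal (Real.exp (c * |ε ω * X ω|)) := by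
          simp_rw [ENNReal.ofReal_mul hK.le]
          rw [lintegral_const_mul _ (Measurable.ennreal_ofReal (by fun_prop))]
      _ ≤ ENNReal.ofReal K * ENNReal.ofReal (10/3) := mul_le_mul_right hE _
      _ = ENNReal.ofReal (K * (10/3)) := by rw [← ENNReal.ofReal_mul hK.le]
  have hfinal : (∫⁻ ω, ENNReal.ofReal (if β < |ε ω * X ω| then |ε ω * X ω| else 0))
      ≤ ENNReal.ofReal (K * (10/3) - K) := by
    rw [ENNReal.ofReal_sub _ hK.le]
    exact ENNReal.le_sub_of_add_le_right ENNReal.ofReal_ne_top hmain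
  apply le_trans hfinal
  apply ENNReal.ofReal_le_ofReal
  have hexp : Real.exp (-β / (2 * a)) = Real.exp (-β / (2 * B₁ * B₂)) := by
    rw [ha_def]; ring_nf
  rw [hK_def, hexp]
  nlinarith [Real.exp_pos (-β / (2 * B₁ * B₂)), ha]
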